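/- There exists a constant C > 0 with the following property: for every Λ > 0, every Λ-upper Ahlfors regular set S ⊆ ℝ³, and all continuously differentiable, compactly supported functions u, v : ℝ³ → ℝ, one has ∫_S |u v| dH² ≤ C Λ (∫_{ℝ³} (u² + ‖∇u‖²) dx)^{1/2} (∫_{ℝ³} (v² + ‖∇v‖²) dx)^{1/2}. -/

import Mathlib

open MeasureTheory Metric
open scoped ENNReal NNReal

noncomputable section

abbrev E3 : Type := EuclideanSpace ℝ (Fin 3)

/-- A set `E ⊆ ℝ³` is `Λ`-upper Ahlfors regular. -/
def UpperAhlfors (Λ : ℝ) (E : Set E3) : Prop :=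
  ∀ x ∈ E, ∀ r > (0 : ℝ), μH[2] (E ∩ Metric.ball x r) ≤ ENNReal.ofReal (Λ * Real.pi * r ^ 2)

section Aux

lemma hrex (x : ℝ≥0∞) : (x ^ ((2:ℕ):ℝ)) = x ^ (2:ℕ) := ENNReal.rpow_natCast x 2

lemma hsqrt_sq (x : ℝ≥0∞) : (x ^ ((1:ℝ)/2)) ^ 2 = x := by
  rw [← ENNReal.rpow_natCast (x ^ ((1:ℝ)/2)) 2, ← ENNReal.rpow_mul]
  norm_num

lemma sq_add_le_four (a b : ℝ≥0∞) : (a + b) ^ 2 ≤ 4 * (a ^ 2 + b ^ 2) := by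
  have h1 : a + b ≤ 2 * (a ⊔ b) := by
    rw [two_mul]; exact add_le_add le_sup_left le_sup_right
  calc (a + b) ^ 2 ≤ (2 * (a ⊔ b)) ^ 2 := by
        exact pow_le_pow_left' h1 2
    _ = 4 * (a ⊔ b) ^ 2 := by ring
    _ ≤ 4 * (a ^ 2 + b ^ 2) := by
        gcongr
        rcases le_total a b with h | h
        · rw [sup_eq_right.2 h]; exact le_add_self
        · rw [sup_eq_left.2 h]; exact le_self_add

/-- Cauchy–Schwarz with `g = 1` for lintegral. -/
lemma lintegral_sq_le_measure_mul {α : Type*} [MeasurableSpace α] (μ : Measure α)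
    {F : α → ℝ≥0∞} (hF : AEMeasurable F μ) :
    (∫⁻ a, F a ∂μ) ^ 2 ≤ μ Set.univ * ∫⁻ a, (F a) ^ 2 ∂μ := by
  have hpq : Real.HolderConjugate 2 2 := ⟨by norm_num, by norm_num, by norm_num⟩
  have h := ENNReal.lintegral_mul_le_Lp_mul_Lq μ hpq hF (aemeasurable_const (b := (1:ℝ≥0∞)))
  simp only [Pi.mul_apply, mul_one, ENNReal.one_rpow, lintegral_const, one_mul] at h
  have h2 : (∫⁻ a, F a ∂μ) ^ 2 ≤ ((∫⁻ a, F a ^ (2:ℝ) ∂μ) ^ ((1:ℝ)/2)) ^ 2 *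
      ((μ Set.univ) ^ ((1:ℝ)/2)) ^ 2 := by
    rw [pow_two, pow_two, pow_two, mul_mul_mul_comm]
    exact mul_le_mul' (by simpa using h) (by simpa using h)
  rw [hsqrt_sq, hsqrt_sq] at h2
  calc (∫⁻ a, F a ∂μ) ^ 2 ≤ (∫⁻ a, F a ^ (2:ℝ) ∂μ) * μ Set.univ := h2
    _ = μ Set.univ * ∫⁻ a, (F a) ^ 2 ∂μ := by
        rw [mul_comm]
        congr 1
        refine lintegral_congr fun a => ?_
        rw [show (2:ℝ) = ((2:ℕ):ℝ) by norm_num, hrex]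

end Aux

section Measure

variable {Λ : ℝ} {S : Set E3}

lemma ahlfors_ball (hS : UpperAhlfors Λ S) (y : E3) {r : ℝ} (hr : 0 < r) :
    μH[2] (S ∩ ball y r) ≤ ENNReal.ofReal (4 * Λ * Real.pi * r ^ 2) := by
  by_cases hne : (S ∩ ball y r).Nonempty
  · obtain ⟨x, hxS, hxy⟩ := hne
    have hsub : S ∩ ball y r ⊆ S ∩ ball x (2 * r) := by
      rintro p ⟨hpS, hpy⟩
      refine ⟨hpS, ?_⟩
      have h1 : dist p x ≤ dist p y + dist y x := dist_triangle p y x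
      have h2 : dist y x < r := by rw [dist_comm]; exact mem_ball.1 hxy
      have h3 : dist p y < r := hpy
      exact mem_ball.2 (by have := mem_ball.1 hpy; linarith)
    refine (measure_mono hsub).trans ?_
    have := hS x hxS (2 * r) (by positivity)
    refine this.trans_eq ?_
    congr 1
    ring
  · rw [Set.not_nonempty_iff_eq_empty.mp hne]
    simp

lemma restrict_ball_le (hS : UpperAhlfors Λ S) (y : E3) {r : ℝ} (hr : 0 < r) :
    (μH[2]).restrict S (ball y r) ≤ ENNReal.ofReal (4 * Λ * Real.pi * r ^ 2) := by
  rw [Measure.restrict_apply measurableSet_ball, Set.inter_comm]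
  exact ahlfors_ball hS y hr

lemma sigmaFinite_restrict (hS : UpperAhlfors Λ S) :
    SigmaFinite ((μH[2]).restrict S) := by
  refine ⟨⟨⟨fun n => ball 0 (n + 1), fun _ => trivial, fun n => ?_, ?_⟩⟩⟩
  · exact (restrict_ball_le hS 0 (by positivity)).trans_lt ENNReal.ofReal_lt_top
  · rw [Set.eq_univ_iff_forall]
    intro x
    obtain ⟨n, hn⟩ := exists_nat_gt (dist x 0)
    exact Set.mem_iUnion.2 ⟨n, mem_ball.2 (by linarith)⟩

end Measure

section Swap

/-- Key Fubini-type identity. -/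
lemma swap_ball {ν : Measure E3} [SFinite ν] {F : E3 → ℝ≥0∞} (hF : Measurable F) (r : ℝ) :
    ∫⁻ x, (∫⁻ z in ball (0:E3) r, F (x + z) ∂volume) ∂ν
      = ∫⁻ y, F y * ν (ball y r) ∂volume := by
  have hset : MeasurableSet {p : E3 × E3 | dist p.2 p.1 < r} := by
    have : IsOpen {p : E3 × E3 | dist p.2 p.1 < r} :=
      isOpen_lt (continuous_dist.comp (continuous_snd.prodMk continuous_fst)) continuous_const
    exact this.measurableSet
  have h1 : ∀ x : E3, (∫⁻ z in ball (0:E3) r, F (x + z) ∂volume)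
      = ∫⁻ y, (ball x r).indicator F y ∂volume := by
    intro x
    rw [← lintegral_indicator measurableSet_ball]
    rw [← lintegral_add_left_eq_self (fun y => (ball x r).indicator F y) x]
    refine lintegral_congr fun z => ?_
    by_cases hz : z ∈ ball (0:E3) r
    · rw [Set.indicator_of_mem hz, Set.indicator_of_mem]
      rw [mem_ball, dist_eq_norm, add_sub_cancel_left]
      exact mem_ball_zero_iff.1 hz
    · rw [Set.indicator_of_notMem hz, Set.indicator_of_notMem]
      rw [mem_ball, dist_eq_norm, add_sub_cancel_left]
      exact fun h => hz (mem_ball_zero_iff.2 h)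
  calc ∫⁻ x, (∫⁻ z in ball (0:E3) r, F (x + z) ∂volume) ∂ν
      = ∫⁻ x, ∫⁻ y, (ball x r).indicator F y ∂volume ∂ν := by
        exact lintegral_congr h1
    _ = ∫⁻ y, ∫⁻ x, (ball x r).indicator F y ∂ν ∂volume := by
        refine lintegral_lintegral_swap ?_
        have : (Function.uncurry fun x y => (ball x r).indicator F y)
            = {p : E3 × E3 | dist p.2 p.1 < r}.indicator (fun p => F p.2) := by
          funext p
          by_cases hp : dist p.2 p.1 < r
          · simp [Function.uncurry, Set.indicator_apply, mem_ball, hp]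
          · simp [Function.uncurry, Set.indicator_apply, mem_ball, hp]
        rw [this]
        exact ((hF.comp measurable_snd).indicator hset).aemeasurable
    _ = ∫⁻ y, F y * ν (ball y r) ∂volume := by
        refine lintegral_congr fun y => ?_
        have : ∀ x : E3, (ball x r).indicator F y
            = (ball y r).indicator (fun _ => F y) x := by
          intro x
          by_cases hx : x ∈ ball y r
          · rw [Set.indicator_of_mem hx]
            exact Set.indicator_of_mem (mem_ball.2 (by rw [dist_comm]; exact mem_ball.1 hx)) F
          · rw [Set.indicator_of_notMem hx]
            exact Set.indicator_of_notMem
              (fun h => hx (mem_ball.2 (by rw [dist_comm]; exact mem_ball.1 h))) F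
        simp_rw [this]
        rw [lintegral_indicator_const measurableSet_ball]

/-- Scaling identity. -/
lemma scale_ball {t : ℝ} (ht : 0 < t) {H : E3 → ℝ≥0∞} (hH : Measurable H) (x : E3) :
    ∫⁻ z in ball (0:E3) 1, H (x + t • z) ∂volume
      = ENNReal.ofReal ((t ^ 3)⁻¹) * ∫⁻ z in ball (0:E3) t, H (x + z) ∂volume := by
  have ht' : t ≠ 0 := ne_of_gt ht
  set G : E3 → ℝ≥0∞ := fun y => (ball (0:E3) t).indicator (fun z => H (x + z)) y with hG
  have hGm : Measurable G := ((hH.comp (measurable_const.add measurable_id)).indicator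
    measurableSet_ball)
  have hmap : Measure.map (t • · : E3 → E3) volume
      = ENNReal.ofReal |(t ^ Module.finrank ℝ E3)⁻¹| • (volume : Measure E3) :=
    Measure.map_addHaar_smul volume ht'
  have h1 : ∫⁻ z, G (t • z) ∂volume = ENNReal.ofReal ((t ^ 3)⁻¹) * ∫⁻ y, G y ∂volume := by
    rw [← lintegral_map hGm (measurable_const_smul t), hmap]
    rw [lintegral_smul_measure]
    congr 2
    rw [abs_of_nonneg (by positivity)]
    rw [show Module.finrank ℝ E3 = 3 from finrank_euclideanSpace_fin]
  have h2 : ∀ z : E3, G (t • z) = (ball (0:E3) 1).indicator (fun z => H (x + t • z)) z := by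
    intro z
    by_cases hz : z ∈ ball (0:E3) 1
    · rw [Set.indicator_of_mem hz, hG]
      refine Set.indicator_of_mem ?_ _
      rw [mem_ball_zero_iff] at hz ⊢
      rw [norm_smul, Real.norm_eq_abs, abs_of_pos ht]
      calc t * ‖z‖ < t * 1 := by exact mul_lt_mul_of_pos_left hz ht
        _ = t := mul_one t
    · rw [Set.indicator_of_notMem hz, hG]
      refine Set.indicator_of_notMem ?_ _
      rw [mem_ball_zero_iff] at hz ⊢
      rw [norm_smul, Real.norm_eq_abs, abs_of_pos ht]
      intro h
      exact hz (by nlinarith [norm_nonneg z])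
  rw [← lintegral_indicator measurableSet_ball, ← lintegral_indicator measurableSet_ball]
  simp_rw [← h2]
  exact h1

end Swap

section Pointwise

/-- Pointwise bound by averaged function and averaged gradient. -/
lemma pointwise_bound (w : E3 → ℝ) (hw : ContDiff ℝ 1 w) (hc : HasCompactSupport w) (x : E3) :
    ENNReal.ofReal (volume (ball (0:E3) 1)).toReal * ENNReal.ofReal |w x|
      ≤ (∫⁻ z in ball (0:E3) 1, ENNReal.ofReal |w (x + z)| ∂volume)
        + ∫⁻ t in Set.Ioc (0:ℝ) 1,
            (∫⁻ z in ball (0:E3) 1, ENNReal.ofReal ‖fderiv ℝ w (x + t • z)‖ ∂volume) := by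
  have hwc : Continuous w := hw.continuous
  set f : E3 → (E3 →L[ℝ] ℝ) := fderiv ℝ w with hf
  have hfc : Continuous f := hw.continuous_fderiv one_ne_zero
  obtain ⟨Mf, hMf⟩ := (hc.fderiv (𝕜 := ℝ)).exists_bound_of_continuous hfc
  obtain ⟨Mw, hMw⟩ := hc.exists_bound_of_continuous hwc
  have hMf0 : 0 ≤ Mf := (norm_nonneg _).trans (hMf 0)
  have hconst : ∀ c : ℝ, IntegrableOn (fun _ : E3 => c) (ball (0:E3) 1) volume :=
    fun c => integrableOn_const measure_ball_lt_top.ne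
  have hline_cont : ∀ t : ℝ, Continuous fun z : E3 => x + t • z :=
    fun t => continuous_const.add (continuous_const_smul t)
  have hwz_cont : ∀ t : ℝ, Continuous fun z : E3 => w (x + t • z) :=
    fun t => hwc.comp (hline_cont t)
  have hfz_cont : ∀ t : ℝ, Continuous fun z : E3 => (f (x + t • z)) z := by
    intro t
    exact isBoundedBilinearMap_apply.continuous.comp (((hfc.comp (hline_cont t))).prodMk
      continuous_id)
  have hfzn_cont : ∀ t : ℝ, Continuous fun z : E3 => ‖f (x + t • z)‖ :=
    fun t => (hfc.comp (hline_cont t)).norm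
  set P : ℝ → ℝ := fun t => ∫ z in ball (0:E3) 1, w (x + t • z) ∂volume with hP
  set Q : ℝ → ℝ := fun t => ∫ z in ball (0:E3) 1, (f (x + t • z)) z ∂volume with hQ
  -- integrability of the derivative integrand
  have hfzz_int : ∀ t : ℝ, IntegrableOn (fun z : E3 => (f (x + t • z)) z)
      (ball (0:E3) 1) volume := by
    intro t
    refine Integrable.mono' (hconst Mf) (hfz_cont t).aestronglyMeasurable ?_
    refine (ae_restrict_iff' measurableSet_ball).2 (Filter.Eventually.of_forall fun z hz => ?_)
    have h1 : ‖(f (x + t • z)) z‖ ≤ ‖f (x + t • z)‖ * ‖z‖ := (f (x + t • z)).le_opNorm z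
    have h2 : ‖z‖ ≤ 1 := le_of_lt (mem_ball_zero_iff.1 hz)
    calc ‖(f (x + t • z)) z‖ ≤ ‖f (x + t • z)‖ * ‖z‖ := h1
      _ ≤ Mf * 1 := mul_le_mul (hMf _) h2 (norm_nonneg _) hMf0
      _ = Mf := mul_one Mf
  have hfzn_int : ∀ t : ℝ, IntegrableOn (fun z : E3 => ‖f (x + t • z)‖)
      (ball (0:E3) 1) volume := by
    intro t
    refine Integrable.mono' (hconst Mf) (hfzn_cont t).aestronglyMeasurable ?_
    exact Filter.Eventually.of_forall fun z => by simpa using hMf (x + t • z)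
  -- differentiation under the integral sign
  have hderiv : ∀ t₀ : ℝ, HasDerivAt P (Q t₀) t₀ := by
    intro t₀
    have h := hasDerivAt_integral_of_dominated_loc_of_deriv_le (s := ball t₀ 1) (ball_mem_nhds t₀ one_pos)
      (F := fun t z => w (x + t • z)) (F' := fun t z => (f (x + t • z)) z)
      (x₀ := t₀) (bound := fun _ => Mf)
      (μ := volume.restrict (ball (0:E3) 1))
      (Filter.Eventually.of_forall fun t => (hwz_cont t).aestronglyMeasurable)
      ?_ ((hfz_cont t₀).aestronglyMeasurable) ?_ (hconst Mf) ?_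
    · exact h.2
    · refine Integrable.mono' (hconst Mw) (hwz_cont t₀).aestronglyMeasurable ?_
      exact Filter.Eventually.of_forall fun z => by simpa using hMw (x + t₀ • z)
    · refine (ae_restrict_iff' measurableSet_ball).2 (Filter.Eventually.of_forall fun z hz => ?_)
      intro t ht
      have h1 : ‖(f (x + t • z)) z‖ ≤ ‖f (x + t • z)‖ * ‖z‖ := (f (x + t • z)).le_opNorm z
      have h2 : ‖z‖ ≤ 1 := le_of_lt (mem_ball_zero_iff.1 hz)
      calc ‖(f (x + t • z)) z‖ ≤ ‖f (x + t • z)‖ * ‖z‖ := h1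
        _ ≤ Mf * 1 := mul_le_mul (hMf _) h2 (norm_nonneg _) hMf0
        _ = Mf := mul_one Mf
    · refine Filter.Eventually.of_forall fun z => ?_
      intro t ht
      have hline : HasDerivAt (fun s : ℝ => x + s • z) z t := by
        simpa using ((hasDerivAt_id t).smul_const z).const_add x
      have hdiff : HasFDerivAt w (f (x + t • z)) (x + t • z) :=
        (hw.differentiable one_ne_zero (x + t • z)).hasFDerivAt
      exact hdiff.comp_hasDerivAt t hline
  -- continuity of Q
  have hQcont : Continuous Q := by
    rw [continuous_iff_continuousAt]
    intro t₀
    refine continuousAt_of_dominated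
      (Filter.Eventually.of_forall fun t => (hfz_cont t).aestronglyMeasurable)
      (Filter.Eventually.of_forall fun t => ?_) (hconst Mf) ?_
    · refine (ae_restrict_iff' measurableSet_ball).2 (Filter.Eventually.of_forall fun z hz => ?_)
      have h1 : ‖(f (x + t • z)) z‖ ≤ ‖f (x + t • z)‖ * ‖z‖ := (f (x + t • z)).le_opNorm z
      have h2 : ‖z‖ ≤ 1 := le_of_lt (mem_ball_zero_iff.1 hz)
      calc ‖(f (x + t • z)) z‖ ≤ ‖f (x + t • z)‖ * ‖z‖ := h1
        _ ≤ Mf * 1 := mul_le_mul (hMf _) h2 (norm_nonneg _) hMf0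
        _ = Mf := mul_one Mf
    · refine Filter.Eventually.of_forall fun z => ?_
      have : Continuous fun t : ℝ => (f (x + t • z)) z := by
        exact isBoundedBilinearMap_apply.continuous.comp
          ((hfc.comp (continuous_const.add (continuous_id.smul continuous_const))).prodMk
            continuous_const)
      exact this.continuousAt
  -- fundamental theorem of calculus
  have hFTC : ∫ t in (0:ℝ)..1, Q t = P 1 - P 0 :=
    intervalIntegral.integral_eq_sub_of_hasDerivAt (fun t _ => hderiv t)
      (hQcont.intervalIntegrable 0 1)
  have hP0 : P 0 = (volume (ball (0:E3) 1)).toReal * w x := by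
    rw [hP]
    simp only [zero_smul, add_zero]
    rw [setIntegral_const, smul_eq_mul]
    rfl
  have hre : (volume (ball (0:E3) 1)).toReal * w x = P 1 - ∫ t in (0:ℝ)..1, Q t := by
    rw [hFTC, hP0]; ring
  -- integrability for conversions
  have hwx_int : IntegrableOn (fun z : E3 => |w (x + z)|) (ball (0:E3) 1) volume := by
    have h1 : Continuous fun z : E3 => w (x + z) := hwc.comp (continuous_const.add continuous_id)
    have h2 : HasCompactSupport fun z : E3 => w (x + z) :=
      hc.comp_homeomorph (Homeomorph.addLeft x)
    exact ((h1.integrable_of_hasCompactSupport h2).abs).integrableOn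
  have hq_int_on : IntegrableOn Q (Set.Ioc (0:ℝ) 1) volume :=
    (intervalIntegrable_iff_integrableOn_Ioc_of_le zero_le_one).1
      (hQcont.intervalIntegrable 0 1)
  -- the real bounds
  have e1 : |P 1| ≤ ∫ z in ball (0:E3) 1, |w (x + z)| ∂volume := by
    have h1 : P 1 = ∫ z in ball (0:E3) 1, w (x + z) ∂volume := by
      rw [hP]; simp only [one_smul]
    rw [h1]
    simpa using norm_integral_le_integral_norm
      (μ := volume.restrict (ball (0:E3) 1)) (fun z : E3 => w (x + z))
  have e2 : |∫ t in (0:ℝ)..1, Q t| ≤ ∫ t in Set.Ioc (0:ℝ) 1, |Q t| ∂volume := by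
    rw [intervalIntegral.integral_of_le zero_le_one]
    simpa using norm_integral_le_integral_norm
      (μ := volume.restrict (Set.Ioc (0:ℝ) 1)) Q
  have hQle : ∀ t : ℝ, ENNReal.ofReal |Q t|
      ≤ ∫⁻ z in ball (0:E3) 1, ENNReal.ofReal ‖f (x + t • z)‖ ∂volume := by
    intro t
    have hb : |Q t| ≤ ∫ z in ball (0:E3) 1, ‖f (x + t • z)‖ ∂volume := by
      have h1 : |Q t| ≤ ∫ z in ball (0:E3) 1, ‖(f (x + t • z)) z‖ ∂volume := by
        simpa using norm_integral_le_integral_norm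
          (μ := volume.restrict (ball (0:E3) 1)) (fun z : E3 => (f (x + t • z)) z)
      refine h1.trans (setIntegral_mono_on ((hfzz_int t).norm) (hfzn_int t)
        measurableSet_ball fun z hz => ?_)
      have h2 : ‖z‖ ≤ 1 := le_of_lt (mem_ball_zero_iff.1 hz)
      calc ‖(f (x + t • z)) z‖ ≤ ‖f (x + t • z)‖ * ‖z‖ := (f (x + t • z)).le_opNorm z
        _ ≤ ‖f (x + t • z)‖ * 1 := by
            exact mul_le_mul_of_nonneg_left h2 (norm_nonneg _)
        _ = ‖f (x + t • z)‖ := mul_one _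
    refine (ENNReal.ofReal_le_ofReal hb).trans_eq ?_
    exact ofReal_integral_eq_lintegral_ofReal (hfzn_int t)
      (Filter.Eventually.of_forall fun z => norm_nonneg _)
  -- assemble
  calc ENNReal.ofReal (volume (ball (0:E3) 1)).toReal * ENNReal.ofReal |w x|
      = ENNReal.ofReal ((volume (ball (0:E3) 1)).toReal * |w x|) :=
        (ENNReal.ofReal_mul ENNReal.toReal_nonneg).symm
    _ = ENNReal.ofReal |(volume (ball (0:E3) 1)).toReal * w x| := by
        rw [abs_mul, abs_of_nonneg ENNReal.toReal_nonneg]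
    _ = ENNReal.ofReal |P 1 - ∫ t in (0:ℝ)..1, Q t| := by rw [hre]
    _ ≤ ENNReal.ofReal (|P 1| + |∫ t in (0:ℝ)..1, Q t|) :=
        ENNReal.ofReal_le_ofReal (abs_sub _ _)
    _ ≤ ENNReal.ofReal |P 1| + ENNReal.ofReal |∫ t in (0:ℝ)..1, Q t| :=
        ENNReal.ofReal_add_le
    _ ≤ (∫⁻ z in ball (0:E3) 1, ENNReal.ofReal |w (x + z)| ∂volume)
        + ∫⁻ t in Set.Ioc (0:ℝ) 1,
            (∫⁻ z in ball (0:E3) 1, ENNReal.ofReal ‖fderiv ℝ w (x + t • z)‖ ∂volume) := by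
        refine add_le_add ?_ ?_
        · refine (ENNReal.ofReal_le_ofReal e1).trans_eq ?_
          exact ofReal_integral_eq_lintegral_ofReal hwx_int
            (Filter.Eventually.of_forall fun z => abs_nonneg _)
        · refine (ENNReal.ofReal_le_ofReal e2).trans ?_
          have h3 : ENNReal.ofReal (∫ t in Set.Ioc (0:ℝ) 1, |Q t| ∂volume)
              = ∫⁻ t in Set.Ioc (0:ℝ) 1, ENNReal.ofReal |Q t| ∂volume :=
            ofReal_integral_eq_lintegral_ofReal hq_int_on.abs
              (Filter.Eventually.of_forall fun t => abs_nonneg _)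
          rw [h3]
          exact lintegral_mono fun t => hQle t

end Pointwise

section Trace

lemma half_integral :
    ∫⁻ t in Set.Ioc (0:ℝ) 1, ENNReal.ofReal (t ^ (-(1/2) : ℝ)) ∂volume = ENNReal.ofReal 2 := by
  have hint : IntervalIntegrable (fun t : ℝ => t ^ (-(1/2) : ℝ)) volume 0 1 :=
    intervalIntegral.intervalIntegrable_rpow' (by norm_num)
  have hIon : IntegrableOn (fun t : ℝ => t ^ (-(1/2):ℝ)) (Set.Ioc (0:ℝ) 1) volume :=
    (intervalIntegrable_iff_integrableOn_Ioc_of_le zero_le_one).1 hint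
  have hval : ∫ t in Set.Ioc (0:ℝ) 1, t ^ (-(1/2):ℝ) ∂volume = 2 := by
    rw [← intervalIntegral.integral_of_le zero_le_one]
    rw [integral_rpow (Or.inl (by norm_num))]
    rw [Real.one_rpow, Real.zero_rpow (by norm_num)]
    norm_num
  rw [← ofReal_integral_eq_lintegral_ofReal hIon
    ((ae_restrict_iff' measurableSet_Ioc).2 (Filter.Eventually.of_forall
      fun t ht => Real.rpow_nonneg ht.1.le _)), hval]

set_option maxHeartbeats 2000000 in
lemma trace_bound {Λ : ℝ} {S : Set E3} (hΛ : 0 ≤ Λ) (hS : UpperAhlfors Λ S)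
    (w : E3 → ℝ) (hw : ContDiff ℝ 1 w) (hc : HasCompactSupport w) :
    ∫⁻ x in S, ENNReal.ofReal ((w x)^2) ∂μH[2] ≤
      (volume (ball (0:E3) 1))⁻¹ * ENNReal.ofReal (64 * Λ * Real.pi) *
        ((∫⁻ y, ENNReal.ofReal ((w y)^2) ∂volume)
          + ∫⁻ y, ENNReal.ofReal (‖fderiv ℝ w y‖^2) ∂volume) := by
  set ν : Measure E3 := (μH[2]).restrict S with hν
  haveI : SigmaFinite ν := sigmaFinite_restrict hS
  set kE : ℝ≥0∞ := volume (ball (0:E3) 1) with hkE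
  have hkE0 : kE ≠ 0 := (measure_ball_pos volume 0 one_pos).ne'
  have hkET : kE ≠ ⊤ := measure_ball_lt_top.ne
  have hwc : Continuous w := hw.continuous
  set f : E3 → (E3 →L[ℝ] ℝ) := fderiv ℝ w with hf
  have hfc : Continuous f := hw.continuous_fderiv one_ne_zero
  -- measurable building blocks
  have hFw2 : Measurable fun y : E3 => ENNReal.ofReal ((w y)^2) :=
    ((hwc.pow 2).measurable).ennreal_ofReal
  have hFf2 : Measurable fun y : E3 => ENNReal.ofReal (‖f y‖^2) :=
    ((hfc.norm.pow 2).measurable).ennreal_ofReal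
  set A : E3 → ℝ≥0∞ :=
    fun x => ∫⁻ z in ball (0:E3) 1, ENNReal.ofReal |w (x + z)| ∂volume with hA_def
  set B2 : ℝ → E3 → ℝ≥0∞ :=
    fun t x => ∫⁻ z in ball (0:E3) 1, ENNReal.ofReal ‖f (x + t • z)‖ ∂volume with hB2_def
  set T : E3 → ℝ≥0∞ := fun x => ∫⁻ t in Set.Ioc (0:ℝ) 1, B2 t x ∂volume with hT_def
  set Iw : ℝ≥0∞ := ∫⁻ y, ENNReal.ofReal ((w y)^2) ∂volume with hIw
  set If : ℝ≥0∞ := ∫⁻ y, ENNReal.ofReal (‖f y‖^2) ∂volume with hIf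
  have hA : Measurable A := by
    have hj : Measurable fun p : E3 × E3 => ENNReal.ofReal |w (p.1 + p.2)| :=
      ((hwc.comp continuous_add).abs.measurable).ennreal_ofReal
    exact hj.lintegral_prod_right'
  have hBpair : Measurable fun p : E3 × ℝ => B2 p.2 p.1 := by
    have hj : Measurable fun q : (E3 × ℝ) × E3 => ENNReal.ofReal ‖f (q.1.1 + q.1.2 • q.2)‖ := by
      have hcont : Continuous fun q : (E3 × ℝ) × E3 => q.1.1 + q.1.2 • q.2 :=
        (continuous_fst.fst).add ((continuous_fst.snd).smul continuous_snd)
      exact (((hfc.comp hcont).norm).measurable).ennreal_ofReal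
    exact hj.lintegral_prod_right'
  have hT : Measurable T := hBpair.lintegral_prod_right'
  -- Step 1: pointwise bound squared
  have hpt : ∀ x : E3, kE ^ 2 * ENNReal.ofReal ((w x)^2) ≤ 4 * (A x ^ 2 + T x ^ 2) := by
    intro x
    have h0 := pointwise_bound w hw hc x
    rw [ENNReal.ofReal_toReal hkET] at h0
    have h1 : (kE * ENNReal.ofReal |w x|) ^ 2 ≤ (A x + T x) ^ 2 := pow_le_pow_left' h0 2
    calc kE ^ 2 * ENNReal.ofReal ((w x)^2) = (kE * ENNReal.ofReal |w x|) ^ 2 := by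
          rw [mul_pow]; congr 1
          rw [← ENNReal.ofReal_pow (abs_nonneg _), sq_abs]
      _ ≤ (A x + T x) ^ 2 := h1
      _ ≤ 4 * (A x ^ 2 + T x ^ 2) := sq_add_le_four _ _
  -- Step 2: integrate over ν
  have hmain : kE ^ 2 * ∫⁻ x, ENNReal.ofReal ((w x)^2) ∂ν
      ≤ 4 * ((∫⁻ x, A x ^ 2 ∂ν) + ∫⁻ x, T x ^ 2 ∂ν) := by
    rw [← lintegral_const_mul' _ _ (ENNReal.pow_ne_top hkET)]
    calc ∫⁻ x, kE ^ 2 * ENNReal.ofReal ((w x)^2) ∂ν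
        ≤ ∫⁻ x, 4 * (A x ^ 2 + T x ^ 2) ∂ν := lintegral_mono hpt
      _ = 4 * ((∫⁻ x, A x ^ 2 ∂ν) + ∫⁻ x, T x ^ 2 ∂ν) := by
          rw [lintegral_const_mul' _ _ (by norm_num : (4:ℝ≥0∞) ≠ ⊤),
            lintegral_add_left (hA.pow_const 2)]
  -- Step 3: A-term
  have hAterm : (∫⁻ x, A x ^ 2 ∂ν)
      ≤ kE * ENNReal.ofReal (4 * Λ * Real.pi) * Iw := by
    have hpt2 : ∀ x : E3, A x ^ 2
        ≤ kE * ∫⁻ z in ball (0:E3) 1, ENNReal.ofReal ((w (x + z))^2) ∂volume := by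
      intro x
      have hm : AEMeasurable (fun z : E3 => ENNReal.ofReal |w (x + z)|)
          (volume.restrict (ball (0:E3) 1)) :=
        (((hwc.comp (continuous_const.add continuous_id)).abs.measurable).ennreal_ofReal).aemeasurable
      have h := lintegral_sq_le_measure_mul (volume.restrict (ball (0:E3) 1)) hm
      rw [Measure.restrict_apply_univ] at h
      refine h.trans_eq ?_
      congr 1
      refine lintegral_congr fun z => ?_
      rw [← ENNReal.ofReal_pow (abs_nonneg _), sq_abs]
    calc (∫⁻ x, A x ^ 2 ∂ν)
        ≤ ∫⁻ x, kE * ∫⁻ z in ball (0:E3) 1, ENNReal.ofReal ((w (x + z))^2) ∂volume ∂ν :=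
          lintegral_mono hpt2
      _ = kE * ∫⁻ x, (∫⁻ z in ball (0:E3) 1, ENNReal.ofReal ((w (x + z))^2) ∂volume) ∂ν :=
          lintegral_const_mul' _ _ hkET
      _ = kE * ∫⁻ y, ENNReal.ofReal ((w y)^2) * ν (ball y 1) ∂volume := by
          rw [swap_ball hFw2 1]
      _ ≤ kE * ∫⁻ y, ENNReal.ofReal ((w y)^2) * ENNReal.ofReal (4 * Λ * Real.pi * 1 ^ 2)
            ∂volume := by
          refine mul_le_mul_right (lintegral_mono fun y => ?_) kE
          exact mul_le_mul_right (restrict_ball_le hS y one_pos) _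
      _ = kE * ENNReal.ofReal (4 * Λ * Real.pi) * Iw := by
          rw [lintegral_mul_const' _ _ ENNReal.ofReal_ne_top]
          rw [show (4 * Λ * Real.pi * 1 ^ 2 : ℝ) = 4 * Λ * Real.pi by ring]
          ring
  -- Step 4: B-term for fixed t
  have hBterm : ∀ t : ℝ, t ∈ Set.Ioc (0:ℝ) 1 → (∫⁻ x, B2 t x ^ 2 ∂ν)
      ≤ kE * (ENNReal.ofReal (4 * Λ * Real.pi) * (ENNReal.ofReal t)⁻¹) * If := by
    rintro t ⟨ht0, ht1⟩
    have hpt2 : ∀ x : E3, B2 t x ^ 2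
        ≤ kE * ∫⁻ z in ball (0:E3) 1, ENNReal.ofReal (‖f (x + t • z)‖^2) ∂volume := by
      intro x
      have hm : AEMeasurable (fun z : E3 => ENNReal.ofReal ‖f (x + t • z)‖)
          (volume.restrict (ball (0:E3) 1)) := by
        refine Measurable.aemeasurable ?_
        exact ((hfc.comp (continuous_const.add (continuous_const_smul t))).norm.measurable).ennreal_ofReal
      have h := lintegral_sq_le_measure_mul (volume.restrict (ball (0:E3) 1)) hm
      rw [Measure.restrict_apply_univ] at h
      refine h.trans_eq ?_
      congr 1
      refine lintegral_congr fun z => ?_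
      rw [← ENNReal.ofReal_pow (norm_nonneg _)]
    have hscale : ∀ x : E3, ∫⁻ z in ball (0:E3) 1, ENNReal.ofReal (‖f (x + t • z)‖^2) ∂volume
        = ENNReal.ofReal ((t ^ 3)⁻¹)
            * ∫⁻ z in ball (0:E3) t, ENNReal.ofReal (‖f (x + z)‖^2) ∂volume :=
      fun x => scale_ball ht0 hFf2 x
    calc (∫⁻ x, B2 t x ^ 2 ∂ν)
        ≤ ∫⁻ x, kE * ∫⁻ z in ball (0:E3) 1, ENNReal.ofReal (‖f (x + t • z)‖^2) ∂volume ∂ν :=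
          lintegral_mono hpt2
      _ = kE * ∫⁻ x, (∫⁻ z in ball (0:E3) 1, ENNReal.ofReal (‖f (x + t • z)‖^2) ∂volume) ∂ν :=
          lintegral_const_mul' _ _ hkET
      _ = kE * (ENNReal.ofReal ((t ^ 3)⁻¹)
            * ∫⁻ x, (∫⁻ z in ball (0:E3) t, ENNReal.ofReal (‖f (x + z)‖^2) ∂volume) ∂ν) := by
          rw [← lintegral_const_mul' _ _ ENNReal.ofReal_ne_top]
          congr 1
          exact lintegral_congr hscale
      _ = kE * (ENNReal.ofReal ((t ^ 3)⁻¹)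
            * ∫⁻ y, ENNReal.ofReal (‖f y‖^2) * ν (ball y t) ∂volume) := by
          rw [swap_ball hFf2 t]
      _ ≤ kE * (ENNReal.ofReal ((t ^ 3)⁻¹)
            * ∫⁻ y, ENNReal.ofReal (‖f y‖^2) * ENNReal.ofReal (4 * Λ * Real.pi * t ^ 2)
              ∂volume) := by
          refine mul_le_mul_right (mul_le_mul_right (lintegral_mono fun y => ?_) _) kE
          exact mul_le_mul_right (restrict_ball_le hS y ht0) _
      _ = kE * (ENNReal.ofReal (4 * Λ * Real.pi) * (ENNReal.ofReal t)⁻¹) * If := by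
          rw [lintegral_mul_const' _ _ ENNReal.ofReal_ne_top]
          rw [← ENNReal.ofReal_inv_of_pos ht0]
          have h1 : ENNReal.ofReal ((t ^ 3)⁻¹) * ENNReal.ofReal (4 * Λ * Real.pi * t ^ 2)
              = ENNReal.ofReal (4 * Λ * Real.pi) * ENNReal.ofReal t⁻¹ := by
            rw [← ENNReal.ofReal_mul (by positivity),
              ← ENNReal.ofReal_mul (mul_nonneg (mul_nonneg (by norm_num) hΛ) Real.pi_pos.le)]
            congr 1
            have ht0' : t ≠ 0 := ht0.ne'
            field_simp
          calc kE * (ENNReal.ofReal ((t ^ 3)⁻¹)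
                * ((∫⁻ (a : E3), ENNReal.ofReal (‖f a‖ ^ 2)) * ENNReal.ofReal (4 * Λ * Real.pi * t ^ 2)))
              = kE * (ENNReal.ofReal ((t ^ 3)⁻¹) * ENNReal.ofReal (4 * Λ * Real.pi * t ^ 2))
                  * ∫⁻ (a : E3), ENNReal.ofReal (‖f a‖ ^ 2) := by ring
            _ = kE * (ENNReal.ofReal (4 * Λ * Real.pi) * ENNReal.ofReal t⁻¹) * If := by
                rw [h1, hIf]
  -- Step 5: T-term
  have haemr : ∀ c : ℝ, AEMeasurable (fun t : ℝ => ENNReal.ofReal (t ^ c))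
      (volume.restrict (Set.Ioc (0:ℝ) 1)) := by
    intro c
    refine AEMeasurable.congr (f := fun t => ENNReal.ofReal (Real.exp (Real.log t * c))) ?_ ?_
    · exact ((Real.measurable_exp.comp (Real.measurable_log.mul_const c)).ennreal_ofReal).aemeasurable
    · refine (ae_restrict_iff' measurableSet_Ioc).2 (Filter.Eventually.of_forall fun t ht => ?_)
      show ENNReal.ofReal (Real.exp (Real.log t * c)) = ENNReal.ofReal (t ^ c)
      rw [Real.rpow_def_of_pos ht.1]
  have hpq : Real.HolderConjugate 2 2 := ⟨by norm_num, by norm_num, by norm_num⟩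
  have hTpt : ∀ x : E3, T x ^ 2
      ≤ ENNReal.ofReal 2 * ∫⁻ t in Set.Ioc (0:ℝ) 1,
          ENNReal.ofReal (Real.sqrt t) * B2 t x ^ 2 ∂volume := by
    intro x
    have hB2x : Measurable fun t : ℝ => B2 t x := by
      have hj : Measurable fun q : ℝ × E3 => ENNReal.ofReal ‖f (x + q.1 • q.2)‖ := by
        have hcont : Continuous fun q : ℝ × E3 => x + q.1 • q.2 :=
          continuous_const.add (continuous_fst.smul continuous_snd)
        exact (((hfc.comp hcont).norm).measurable).ennreal_ofReal
      exact hj.lintegral_prod_right'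
    set g1 : ℝ → ℝ≥0∞ := fun t => ENNReal.ofReal (t ^ (-(1/4) : ℝ)) with hg1
    set g2 : ℝ → ℝ≥0∞ := fun t => ENNReal.ofReal (t ^ ((1/4) : ℝ)) * B2 t x with hg2
    have hg1m : AEMeasurable g1 (volume.restrict (Set.Ioc (0:ℝ) 1)) := haemr _
    have hg2m : AEMeasurable g2 (volume.restrict (Set.Ioc (0:ℝ) 1)) :=
      (haemr _).mul hB2x.aemeasurable
    have hsplit : T x = ∫⁻ t in Set.Ioc (0:ℝ) 1, (g1 * g2) t ∂volume := by
      refine setLIntegral_congr_fun measurableSet_Ioc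
        (fun t ht => ?_)
      simp only [Pi.mul_apply, hg1, hg2]
      rw [← mul_assoc, ← ENNReal.ofReal_mul (Real.rpow_nonneg ht.1.le _),
        ← Real.rpow_add ht.1]
      rw [show (-(1/4) + (1/4) : ℝ) = 0 by norm_num, Real.rpow_zero, ENNReal.ofReal_one,
        one_mul]
    have hH := ENNReal.lintegral_mul_le_Lp_mul_Lq (volume.restrict (Set.Ioc (0:ℝ) 1))
      hpq hg1m hg2m
    have hx1 : (∫⁻ t in Set.Ioc (0:ℝ) 1, g1 t ^ (2:ℝ) ∂volume) = ENNReal.ofReal 2 := by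
      rw [← half_integral]
      refine setLIntegral_congr_fun measurableSet_Ioc
        (fun t ht => ?_)
      rw [hg1, ENNReal.ofReal_rpow_of_nonneg (Real.rpow_nonneg ht.1.le _)
        (by norm_num : (0:ℝ) ≤ 2)]
      congr 1
      rw [← Real.rpow_mul ht.1.le]
      norm_num
    have hx2 : (∫⁻ t in Set.Ioc (0:ℝ) 1, g2 t ^ (2:ℝ) ∂volume)
        = ∫⁻ t in Set.Ioc (0:ℝ) 1, ENNReal.ofReal (Real.sqrt t) * B2 t x ^ 2 ∂volume := by
      refine setLIntegral_congr_fun measurableSet_Ioc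
        (fun t ht => ?_)
      rw [hg2, ENNReal.mul_rpow_of_nonneg _ _ (by norm_num : (0:ℝ) ≤ 2)]
      congr 1
      · rw [ENNReal.ofReal_rpow_of_nonneg (Real.rpow_nonneg ht.1.le _)
          (by norm_num : (0:ℝ) ≤ 2)]
        congr 1
        rw [Real.sqrt_eq_rpow, ← Real.rpow_mul ht.1.le]
        norm_num
      · rw [show (2:ℝ) = ((2:ℕ):ℝ) by norm_num, hrex]
    have hfin : T x ≤ (ENNReal.ofReal 2) ^ ((1:ℝ)/2)
        * (∫⁻ t in Set.Ioc (0:ℝ) 1, ENNReal.ofReal (Real.sqrt t) * B2 t x ^ 2 ∂volume)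
          ^ ((1:ℝ)/2) := by
      rw [hsplit]
      refine hH.trans_eq ?_
      rw [hx1, hx2]
    calc T x ^ 2 ≤ ((ENNReal.ofReal 2) ^ ((1:ℝ)/2)
        * (∫⁻ t in Set.Ioc (0:ℝ) 1, ENNReal.ofReal (Real.sqrt t) * B2 t x ^ 2 ∂volume)
          ^ ((1:ℝ)/2)) ^ 2 := pow_le_pow_left' hfin 2
      _ = ENNReal.ofReal 2 * ∫⁻ t in Set.Ioc (0:ℝ) 1,
            ENNReal.ofReal (Real.sqrt t) * B2 t x ^ 2 ∂volume := by
          rw [mul_pow, hsqrt_sq, hsqrt_sq]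
  -- Step 5b: integrate the T bound
  have hsqinv : Measurable fun t : ℝ => ENNReal.ofReal (Real.sqrt t) * (ENNReal.ofReal t)⁻¹ :=
    (Real.continuous_sqrt.measurable.ennreal_ofReal).mul (measurable_id.ennreal_ofReal.inv)
  have hTterm : (∫⁻ x, T x ^ 2 ∂ν)
      ≤ ENNReal.ofReal 2 * (kE * ENNReal.ofReal (4 * Λ * Real.pi) * If * ENNReal.ofReal 2) := by
    have hswap : (∫⁻ x, (∫⁻ t in Set.Ioc (0:ℝ) 1,
          ENNReal.ofReal (Real.sqrt t) * B2 t x ^ 2 ∂volume) ∂ν)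
        = ∫⁻ t in Set.Ioc (0:ℝ) 1, (∫⁻ x, ENNReal.ofReal (Real.sqrt t) * B2 t x ^ 2 ∂ν)
            ∂volume := by
      refine lintegral_lintegral_swap ?_
      exact (((Real.continuous_sqrt.measurable.comp measurable_snd).ennreal_ofReal).mul
        (hBpair.pow_const 2)).aemeasurable
    calc (∫⁻ x, T x ^ 2 ∂ν)
        ≤ ∫⁻ x, ENNReal.ofReal 2 * ∫⁻ t in Set.Ioc (0:ℝ) 1,
            ENNReal.ofReal (Real.sqrt t) * B2 t x ^ 2 ∂volume ∂ν := lintegral_mono hTpt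
      _ = ENNReal.ofReal 2 * ∫⁻ x, (∫⁻ t in Set.Ioc (0:ℝ) 1,
            ENNReal.ofReal (Real.sqrt t) * B2 t x ^ 2 ∂volume) ∂ν :=
          lintegral_const_mul' _ _ ENNReal.ofReal_ne_top
      _ = ENNReal.ofReal 2 * ∫⁻ t in Set.Ioc (0:ℝ) 1,
            (∫⁻ x, ENNReal.ofReal (Real.sqrt t) * B2 t x ^ 2 ∂ν) ∂volume := by rw [hswap]
      _ = ENNReal.ofReal 2 * ∫⁻ t in Set.Ioc (0:ℝ) 1,
            ENNReal.ofReal (Real.sqrt t) * (∫⁻ x, B2 t x ^ 2 ∂ν) ∂volume := by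
          congr 1
          exact lintegral_congr fun t => lintegral_const_mul' _ _ ENNReal.ofReal_ne_top
      _ ≤ ENNReal.ofReal 2 * ∫⁻ t in Set.Ioc (0:ℝ) 1,
            ENNReal.ofReal (Real.sqrt t)
              * (kE * (ENNReal.ofReal (4 * Λ * Real.pi) * (ENNReal.ofReal t)⁻¹) * If)
            ∂volume := by
          refine mul_le_mul_right ?_ _
          refine lintegral_mono_ae ((ae_restrict_iff' measurableSet_Ioc).2
            (Filter.Eventually.of_forall fun t ht => ?_))
          exact mul_le_mul_right (hBterm t ht) _
      _ = ENNReal.ofReal 2 * (kE * ENNReal.ofReal (4 * Λ * Real.pi) * If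
            * ∫⁻ t in Set.Ioc (0:ℝ) 1,
                ENNReal.ofReal (Real.sqrt t) * (ENNReal.ofReal t)⁻¹ ∂volume) := by
          congr 1
          rw [← lintegral_const_mul (kE * ENNReal.ofReal (4 * Λ * Real.pi) * If) hsqinv]
          exact lintegral_congr fun t => by ring
      _ = ENNReal.ofReal 2 * (kE * ENNReal.ofReal (4 * Λ * Real.pi) * If
            * ENNReal.ofReal 2) := by
          congr 2
          rw [← half_integral]
          refine setLIntegral_congr_fun measurableSet_Ioc
            (fun t ht => ?_)
          rw [← ENNReal.ofReal_inv_of_pos ht.1,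
            ← ENNReal.ofReal_mul (Real.sqrt_nonneg t)]
          congr 1
          rw [Real.sqrt_eq_rpow, show t⁻¹ = t ^ (-1 : ℝ) from (Real.rpow_neg_one t).symm,
            ← Real.rpow_add ht.1]
          norm_num
  -- final assembly
  have hc4 : ENNReal.ofReal (2:ℝ) = 2 := by norm_num
  have hfinal : kE ^ 2 * ∫⁻ x, ENNReal.ofReal ((w x)^2) ∂ν
      ≤ 16 * (kE * ENNReal.ofReal (4 * Λ * Real.pi) * (Iw + If)) := by
    refine hmain.trans ?_
    have h2 : (∫⁻ x, T x ^ 2 ∂ν) ≤ 4 * (kE * ENNReal.ofReal (4 * Λ * Real.pi) * If) := by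
      refine hTterm.trans_eq ?_
      rw [hc4]; ring
    calc 4 * ((∫⁻ x, A x ^ 2 ∂ν) + ∫⁻ x, T x ^ 2 ∂ν)
        ≤ 4 * ((kE * ENNReal.ofReal (4 * Λ * Real.pi) * Iw)
            + 4 * (kE * ENNReal.ofReal (4 * Λ * Real.pi) * If)) :=
          mul_le_mul_right (add_le_add hAterm h2) 4
      _ = 4 * (kE * ENNReal.ofReal (4 * Λ * Real.pi) * Iw)
            + 16 * (kE * ENNReal.ofReal (4 * Λ * Real.pi) * If) := by ring
      _ ≤ 16 * (kE * ENNReal.ofReal (4 * Λ * Real.pi) * Iw)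
            + 16 * (kE * ENNReal.ofReal (4 * Λ * Real.pi) * If) :=
          add_le_add (mul_le_mul_left (by norm_num) _) le_rfl
      _ = 16 * (kE * ENNReal.ofReal (4 * Λ * Real.pi) * (Iw + If)) := by ring
  have hne0 : kE ^ 2 ≠ 0 := pow_ne_zero 2 hkE0
  have hneT : kE ^ 2 ≠ ⊤ := ENNReal.pow_ne_top hkET
  have h1 : (∫⁻ x, ENNReal.ofReal ((w x)^2) ∂ν)
      = (kE ^ 2)⁻¹ * (kE ^ 2 * ∫⁻ x, ENNReal.ofReal ((w x)^2) ∂ν) := by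
    rw [← mul_assoc, ENNReal.inv_mul_cancel hne0 hneT, one_mul]
  calc (∫⁻ x, ENNReal.ofReal ((w x)^2) ∂ν)
      = (kE ^ 2)⁻¹ * (kE ^ 2 * ∫⁻ x, ENNReal.ofReal ((w x)^2) ∂ν) := h1
    _ ≤ (kE ^ 2)⁻¹ * (16 * (kE * ENNReal.ofReal (4 * Λ * Real.pi) * (Iw + If))) :=
        mul_le_mul_right hfinal _
    _ = kE⁻¹ * (16 * ENNReal.ofReal (4 * Λ * Real.pi)) * (Iw + If) := by
        rw [pow_two, ENNReal.mul_inv (Or.inl hkE0) (Or.inl hkET)]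
        calc kE⁻¹ * kE⁻¹ * (16 * (kE * ENNReal.ofReal (4 * Λ * Real.pi) * (Iw + If)))
            = (kE⁻¹ * kE) * (kE⁻¹ * (16 * ENNReal.ofReal (4 * Λ * Real.pi)) * (Iw + If)) := by
              ring
          _ = kE⁻¹ * (16 * ENNReal.ofReal (4 * Λ * Real.pi)) * (Iw + If) := by
              rw [ENNReal.inv_mul_cancel hkE0 hkET, one_mul]
    _ = kE⁻¹ * ENNReal.ofReal (64 * Λ * Real.pi) * (Iw + If) := by
        congr 2
        rw [show (16:ℝ≥0∞) = ENNReal.ofReal 16 by norm_num,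
          ← ENNReal.ofReal_mul (by norm_num)]
        congr 1
        ring

end Trace

theorem stmt11 :
    ∃ C > (0 : ℝ), ∀ (Λ : ℝ), 0 < Λ → ∀ S : Set E3, UpperAhlfors Λ S →
      ∀ u v : E3 → ℝ, ContDiff ℝ 1 u → HasCompactSupport u →
        ContDiff ℝ 1 v → HasCompactSupport v →
        ∫⁻ x in S, ENNReal.ofReal |u x * v x| ∂μH[2] ≤
          ENNReal.ofReal (C * Λ *
            Real.sqrt (∫ x, (u x ^ 2 + ‖gradient u x‖ ^ 2)) *
            Real.sqrt (∫ x, (v x ^ 2 + ‖gradient v x‖ ^ 2))) := by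
  have hκpos : 0 < (volume (ball (0:E3) 1)).toReal :=
    ENNReal.toReal_pos (measure_ball_pos volume 0 one_pos).ne' measure_ball_lt_top.ne
  set κ : ℝ := (volume (ball (0:E3) 1)).toReal with hκ
  refine ⟨64 * Real.pi / κ, by positivity, ?_⟩
  intro Λ hΛ S hS u v hu hcu hv hcv
  set C : ℝ := 64 * Real.pi / κ with hC
  have hCpos : 0 < C := by positivity
  -- gradient norm = fderiv norm
  have hgrad : ∀ (w : E3 → ℝ) (y : E3), ‖gradient w y‖ = ‖fderiv ℝ w y‖ := by
    intro w y
    have h : gradient w y = (InnerProductSpace.toDual ℝ E3).symm (fderiv ℝ w y) := rfl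
    rw [h]
    exact LinearIsometryEquiv.norm_map _ _
  -- conversion of the Sobolev integrals
  have key : ∀ w : E3 → ℝ, ContDiff ℝ 1 w → HasCompactSupport w →
      (∫⁻ y, ENNReal.ofReal ((w y)^2) ∂volume)
        + (∫⁻ y, ENNReal.ofReal (‖fderiv ℝ w y‖^2) ∂volume)
      = ENNReal.ofReal (∫ x, (w x ^ 2 + ‖gradient w x‖ ^ 2)) := by
    intro w hw hc
    have hfc : Continuous (fderiv ℝ w) := hw.continuous_fderiv one_ne_zero
    have h1 : Integrable (fun y : E3 => (w y)^2) volume := by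
      have hcs : HasCompactSupport fun y : E3 => (w y)^2 := by
        have he : (fun y : E3 => (w y)^2) = w * w := by funext y; simp [pow_two]
        rw [he]
        exact hc.mul_left
      exact ((hw.continuous.pow 2).integrable_of_hasCompactSupport hcs)
    have h2 : Integrable (fun y : E3 => ‖fderiv ℝ w y‖^2) volume := by
      have hcs : HasCompactSupport fun y : E3 => ‖fderiv ℝ w y‖^2 := by
        refine (hc.fderiv (𝕜 := ℝ)).comp_left (g := fun L : E3 →L[ℝ] ℝ => ‖L‖^2) ?_
        simp
      exact ((hfc.norm.pow 2).integrable_of_hasCompactSupport hcs)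
    have hint : Integrable (fun x : E3 => w x ^ 2 + ‖fderiv ℝ w x‖^2) volume := h1.add h2
    have e1 : ENNReal.ofReal (∫ x, (w x ^ 2 + ‖gradient w x‖ ^ 2))
        = ∫⁻ y, ENNReal.ofReal (w y ^ 2 + ‖fderiv ℝ w y‖^2) ∂volume := by
      have hgr : (fun x : E3 => w x ^ 2 + ‖gradient w x‖ ^ 2)
          = fun x : E3 => w x ^ 2 + ‖fderiv ℝ w x‖ ^ 2 := by
        funext x; rw [hgrad]
      rw [hgr]
      exact ofReal_integral_eq_lintegral_ofReal hint
        (Filter.Eventually.of_forall fun y => add_nonneg (sq_nonneg _) (sq_nonneg _))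
    rw [e1]
    rw [← lintegral_add_left (f := fun y : E3 => ENNReal.ofReal (w y ^ 2))
      (((hw.continuous.pow 2).measurable).ennreal_ofReal)]
    exact (lintegral_congr fun y =>
      (ENNReal.ofReal_add (sq_nonneg _) (sq_nonneg _))).symm
  -- Cauchy–Schwarz on S
  have hsq2 : ∀ a : ℝ, ENNReal.ofReal |a| ^ (2:ℝ) = ENNReal.ofReal (a ^ 2) := by
    intro a
    rw [ENNReal.ofReal_rpow_of_nonneg (abs_nonneg _) (by norm_num : (0:ℝ) ≤ 2)]
    congr 1
    rw [show (2:ℝ) = ((2:ℕ):ℝ) by norm_num, Real.rpow_natCast, sq_abs]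
  have hCS : ∫⁻ x in S, ENNReal.ofReal |u x * v x| ∂μH[2]
      ≤ (∫⁻ x in S, ENNReal.ofReal ((u x)^2) ∂μH[2]) ^ ((1:ℝ)/2)
        * (∫⁻ x in S, ENNReal.ofReal ((v x)^2) ∂μH[2]) ^ ((1:ℝ)/2) := by
    have hpq : Real.HolderConjugate 2 2 := ⟨by norm_num, by norm_num, by norm_num⟩
    have hfm : AEMeasurable (fun x : E3 => ENNReal.ofReal |u x|) ((μH[2]).restrict S) :=
      ((hu.continuous.abs.measurable).ennreal_ofReal).aemeasurable
    have hgm : AEMeasurable (fun x : E3 => ENNReal.ofReal |v x|) ((μH[2]).restrict S) :=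
      ((hv.continuous.abs.measurable).ennreal_ofReal).aemeasurable
    have h := ENNReal.lintegral_mul_le_Lp_mul_Lq ((μH[2]).restrict S) hpq hfm hgm
    calc ∫⁻ x in S, ENNReal.ofReal |u x * v x| ∂μH[2]
        = ∫⁻ x in S, (fun x : E3 => ENNReal.ofReal |u x|) x
            * (fun x : E3 => ENNReal.ofReal |v x|) x ∂μH[2] := by
          refine lintegral_congr fun x => ?_
          rw [abs_mul, ENNReal.ofReal_mul (abs_nonneg _)]
      _ ≤ (∫⁻ x in S, ENNReal.ofReal |u x| ^ (2:ℝ) ∂μH[2]) ^ ((1:ℝ)/2)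
          * (∫⁻ x in S, ENNReal.ofReal |v x| ^ (2:ℝ) ∂μH[2]) ^ ((1:ℝ)/2) := h
      _ = (∫⁻ x in S, ENNReal.ofReal ((u x)^2) ∂μH[2]) ^ ((1:ℝ)/2)
          * (∫⁻ x in S, ENNReal.ofReal ((v x)^2) ∂μH[2]) ^ ((1:ℝ)/2) := by
          congr 1
          · congr 1
            exact lintegral_congr fun x => hsq2 (u x)
          · congr 1
            exact lintegral_congr fun x => hsq2 (v x)
  -- trace bounds
  have hkinv : (volume (ball (0:E3) 1))⁻¹ = ENNReal.ofReal κ⁻¹ := by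
    rw [← ENNReal.ofReal_toReal (measure_ball_lt_top
      (x := (0:E3)) (r := 1)).ne, ENNReal.ofReal_inv_of_pos hκpos]
  have htr : ∀ w : E3 → ℝ, ContDiff ℝ 1 w → HasCompactSupport w →
      (∫⁻ x in S, ENNReal.ofReal ((w x)^2) ∂μH[2])
        ≤ ENNReal.ofReal (C * Λ * ∫ x, (w x ^ 2 + ‖gradient w x‖ ^ 2)) := by
    intro w hw hc
    refine (trace_bound hΛ.le hS w hw hc).trans ?_
    rw [key w hw hc, hkinv]
    rw [← ENNReal.ofReal_mul (inv_nonneg.2 hκpos.le)]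
    rw [← ENNReal.ofReal_mul (by positivity)]
    apply ENNReal.ofReal_le_ofReal
    apply le_of_eq
    rw [hC]
    ring
  have hNu : 0 ≤ ∫ x, (u x ^ 2 + ‖gradient u x‖ ^ 2) :=
    integral_nonneg fun x => add_nonneg (sq_nonneg _) (sq_nonneg _)
  have hNv : 0 ≤ ∫ x, (v x ^ 2 + ‖gradient v x‖ ^ 2) :=
    integral_nonneg fun x => add_nonneg (sq_nonneg _) (sq_nonneg _)
  calc ∫⁻ x in S, ENNReal.ofReal |u x * v x| ∂μH[2]
      ≤ (∫⁻ x in S, ENNReal.ofReal ((u x)^2) ∂μH[2]) ^ ((1:ℝ)/2)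
        * (∫⁻ x in S, ENNReal.ofReal ((v x)^2) ∂μH[2]) ^ ((1:ℝ)/2) := hCS
    _ ≤ (ENNReal.ofReal (C * Λ * ∫ x, (u x ^ 2 + ‖gradient u x‖ ^ 2))) ^ ((1:ℝ)/2)
        * (ENNReal.ofReal (C * Λ * ∫ x, (v x ^ 2 + ‖gradient v x‖ ^ 2))) ^ ((1:ℝ)/2) :=
        mul_le_mul' (ENNReal.rpow_le_rpow (htr u hu hcu) (by norm_num))
          (ENNReal.rpow_le_rpow (htr v hv hcv) (by norm_num))
    _ = ENNReal.ofReal (Real.sqrt (C * Λ * ∫ x, (u x ^ 2 + ‖gradient u x‖ ^ 2)))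
        * ENNReal.ofReal (Real.sqrt (C * Λ * ∫ x, (v x ^ 2 + ‖gradient v x‖ ^ 2))) := by
        rw [ENNReal.ofReal_rpow_of_nonneg (by positivity) (by norm_num : (0:ℝ) ≤ 1/2),
          ENNReal.ofReal_rpow_of_nonneg (by positivity) (by norm_num : (0:ℝ) ≤ 1/2)]
        rw [← Real.sqrt_eq_rpow, ← Real.sqrt_eq_rpow]
    _ = ENNReal.ofReal (C * Λ *
          Real.sqrt (∫ x, (u x ^ 2 + ‖gradient u x‖ ^ 2)) *
          Real.sqrt (∫ x, (v x ^ 2 + ‖gradient v x‖ ^ 2))) := by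
        rw [← ENNReal.ofReal_mul (Real.sqrt_nonneg _)]
        congr 1
        rw [Real.sqrt_mul (by positivity : (0:ℝ) ≤ C * Λ),
          Real.sqrt_mul (by positivity : (0:ℝ) ≤ C * Λ)]
        rw [show Real.sqrt (C * Λ) * Real.sqrt (∫ x, (u x ^ 2 + ‖gradient u x‖ ^ 2))
              * (Real.sqrt (C * Λ) * Real.sqrt (∫ x, (v x ^ 2 + ‖gradient v x‖ ^ 2)))
            = Real.sqrt (C * Λ) * Real.sqrt (C * Λ)
              * (Real.sqrt (∫ x, (u x ^ 2 + ‖gradient u x‖ ^ 2))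
                * Real.sqrt (∫ x, (v x ^ 2 + ‖gradient v x‖ ^ 2))) from by ring,
          Real.mul_self_sqrt (by positivity : (0:ℝ) ≤ C * Λ)]
        ring

end
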